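/- arXiv:2603.19326 — 2 statements merged into one kernel-verified Lean document; each statement's English description precedes it below -/
import Mathlib

section
/- If t_0 < 1, ϱ_0 > 0, η_0 > 0, and γ_0 ≥ 0, then the point E_T = (1 − t_0, 0, ϱ_0/(ϱ_0 + γ_0(1 − t_0)), (1 − t_0)/η_0, 0) is a steady state of the dimensionless reaction system (all five reaction terms vanish at E_T), and all components of E_T are nonnegative with the first component strictly positive. -/
/-- The bacteria-free tumor equilibrium E_T is a steady state with nonnegative
components and strictly positive tumor component. -/
theorem bacteria_free_steady_state
    (t0 α0 μ0 κ b0 β0 γ0 ϱ0 η0 lam0 : ℝ)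
    (ht0 : 0 ≤ t0) (hα0 : 0 ≤ α0) (hμ0 : 0 ≤ μ0) (hκ : 0 < κ) (hb0 : 0 ≤ b0)
    (hβ0 : 0 ≤ β0) (hγ0 : 0 ≤ γ0) (hϱ0 : 0 < ϱ0) (hη0 : 0 < η0) (hlam0 : 0 ≤ lam0)
    (ht0lt : t0 < 1)
    (T B O I S : ℝ)
    (hT : T = 1 - t0) (hB : B = 0)
    (hO : O = ϱ0 / (ϱ0 + γ0 * (1 - t0)))
    (hI : I = (1 - t0) / η0) (hS : S = 0) :
    (T * (1 - T) - t0 * T - α0 * S * T = 0 ∧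
     μ0 * B * κ / (κ + O) - b0 * B - β0 * I * B = 0 ∧
     -γ0 * T * O + ϱ0 * (1 - O) = 0 ∧
     T - η0 * I = 0 ∧
     B - lam0 * S = 0) ∧
    (0 < T ∧ 0 ≤ B ∧ 0 ≤ O ∧ 0 ≤ I ∧ 0 ≤ S) := by
  have h1t : (0:ℝ) < 1 - t0 := by linarith
  have hden : (0:ℝ) < ϱ0 + γ0 * (1 - t0) := by positivity
  subst hT hB hO hI hS
  refine ⟨⟨by ring, by ring, ?_, ?_, by ring⟩,
    h1t, le_refl 0, by positivity, by positivity, le_refl 0⟩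
  · field_simp
    ring
  · field_simp
    ring
end

section
/- Given T̄ with 0 < T̄ < 1 − t_0 solving μ_0·κ(ϱ_0 + γ_0·T̄)/(κ(ϱ_0 + γ_0·T̄) + ϱ_0) = b_0 + (β_0/η_0)·T̄, the point E* = (T̄, (λ_0/α_0)(1 − t_0 − T̄), ϱ_0/(ϱ_0 + γ_0·T̄), T̄/η_0, (1/α_0)(1 − t_0 − T̄)) is a steady state of the dimensionless reaction system: all five reaction terms G_T, G_B, G_O, G_I, G_S vanish at E*, and all components of E* are strictly positive. -/
/-- The coexistence point E* is a steady state with strictly positive components. -/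
theorem coexistence_steady_state
    (t0 b0 β0 γ0 μ0 κ ϱ0 η0 lam0 α0 : ℝ)
    (ht0 : 0 ≤ t0) (hb0 : 0 ≤ b0) (hβ0 : 0 ≤ β0) (hγ0 : 0 ≤ γ0) (hμ0 : 0 ≤ μ0)
    (hκ : 0 < κ) (hϱ0 : 0 < ϱ0) (hη0 : 0 < η0) (hlam0 : 0 < lam0) (hα0 : 0 < α0)
    (ht0lt : t0 < 1)
    (Tb : ℝ) (hTb0 : 0 < Tb) (hTb1 : Tb < 1 - t0)
    (hroot : μ0 * (κ * (ϱ0 + γ0 * Tb)) / (κ * (ϱ0 + γ0 * Tb) + ϱ0)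
              = b0 + (β0 / η0) * Tb)
    (T B O I S : ℝ)
    (hT : T = Tb) (hB : B = (lam0 / α0) * (1 - t0 - Tb))
    (hO : O = ϱ0 / (ϱ0 + γ0 * Tb)) (hI : I = Tb / η0)
    (hS : S = (1 / α0) * (1 - t0 - Tb)) :
    (T * (1 - T) - t0 * T - α0 * S * T = 0 ∧
     μ0 * B * κ / (κ + O) - b0 * B - β0 * I * B = 0 ∧
     -γ0 * T * O + ϱ0 * (1 - O) = 0 ∧
     T - η0 * I = 0 ∧
     B - lam0 * S = 0) ∧
    (0 < T ∧ 0 < B ∧ 0 < O ∧ 0 < I ∧ 0 < S) := by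
  have hd : 0 < ϱ0 + γ0 * Tb := by positivity
  have hd' : ϱ0 + γ0 * Tb ≠ 0 := ne_of_gt hd
  have hpos : 0 < 1 - t0 - Tb := by linarith
  have hκO : κ + O = (κ * (ϱ0 + γ0 * Tb) + ϱ0) / (ϱ0 + γ0 * Tb) := by
    rw [hO]; field_simp
  have hden : 0 < κ * (ϱ0 + γ0 * Tb) + ϱ0 := by positivity
  subst hT hB hO hI hS
  refine ⟨⟨by ring_nf; field_simp; ring, ?_, by field_simp; ring, by field_simp; ring, by field_simp; ring⟩,
    hTb0, by positivity, by positivity, by positivity, by positivity⟩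
  rw [hκO]
  have key : μ0 * ((lam0 / α0) * (1 - t0 - T)) * κ / ((κ * (ϱ0 + γ0 * T) + ϱ0) / (ϱ0 + γ0 * T))
      = ((lam0 / α0) * (1 - t0 - T)) * (μ0 * (κ * (ϱ0 + γ0 * T)) / (κ * (ϱ0 + γ0 * T) + ϱ0)) := by
    field_simp
  rw [key, hroot]
  field_simp
  ring
end
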